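/- For real numbers $x, y_1, \dots, y_\tau \in [-1/(20(1+\tau)), 1/(20(1+\tau))]$ and $a_1,\dots,a_\tau \in [0, 1/20]$, the inequality $\exp\left(\sum_{i=1}^\tau(-y_i - y_i^2 - 2a_i|y_i| - 2|x y_i|) - x - x^2\right) \le \exp\left(\sum_{i=1}^\tau(-y_i - y_i^2 - 2a_i|y_i|)\right) - x$ holds. -/

import Mathlib

set_option maxHeartbeats 1000000

lemma aux1 (t : ℝ) (ht : |t| ≤ 1/10) : Real.exp (-t - t^2) ≤ 1 - t := by
  have hu : |(-t - t^2)| ≤ 1 := by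
    rw [abs_le] at ht ⊢; constructor <;> nlinarith
  have h := Real.exp_bound hu (n := 2) (by norm_num)
  rw [abs_le] at h ht
  simp [Finset.sum_range_succ] at h
  have h' : 0 ≤ 1 - (3/4) * (1+t)^2 := by nlinarith
  nlinarith [mul_nonneg (sq_nonneg t) h']

theorem stmt0 (τ : ℕ) (hτ : 0 < τ) (x : ℝ) (y a : Fin τ → ℝ)
    (hx : |x| ≤ 1 / (20 * (1 + (τ : ℝ))))
    (hy : ∀ i, |y i| ≤ 1 / (20 * (1 + (τ : ℝ))))
    (ha : ∀ i, a i ∈ Set.Icc (0 : ℝ) (1 / 20)) :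
    Real.exp ((∑ i, (-(y i) - (y i) ^ 2 - 2 * a i * |y i| - 2 * |x * y i|)) - x - x ^ 2)
      ≤ Real.exp (∑ i, (-(y i) - (y i) ^ 2 - 2 * a i * |y i|)) - x := by
  set S : ℝ := ∑ i, (-(y i) - (y i) ^ 2 - 2 * a i * |y i|) with hSdef
  set Y : ℝ := ∑ i, |y i| with hYdef
  have hτ1 : (1:ℝ) ≤ (τ:ℝ) := by exact_mod_cast hτ
  have hτ0 : (0:ℝ) < 20 * (1 + (τ:ℝ)) := by positivity
  have hx40 : |x| ≤ 1/40 := by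
    refine hx.trans ?_
    rw [div_le_div_iff₀ hτ0 (by norm_num)]; nlinarith
  have hy40 : ∀ i, |y i| ≤ 1/40 := fun i => by
    refine (hy i).trans ?_
    rw [div_le_div_iff₀ hτ0 (by norm_num)]; nlinarith
  have hY0 : 0 ≤ Y := Finset.sum_nonneg fun i _ => abs_nonneg _
  have hY : Y ≤ 1/20 := by
    have h1 : Y ≤ (Finset.univ : Finset (Fin τ)).card • (1 / (20 * (1 + (τ:ℝ)))) :=
      Finset.sum_le_card_nsmul _ _ _ (fun i _ => hy i)
    simp only [Finset.card_univ, Fintype.card_fin, nsmul_eq_mul] at h1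
    have heq : (τ:ℝ) * (1 / (20 * (1 + (τ:ℝ)))) = (τ:ℝ) / (20 * (1 + (τ:ℝ))) := by ring
    rw [heq] at h1
    refine h1.trans ?_
    rw [div_le_div_iff₀ hτ0 (by norm_num)]; nlinarith
  have hS : |S| ≤ (9/8) * Y := by
    calc |S| ≤ ∑ i, |(-(y i) - (y i) ^ 2 - 2 * a i * |y i|)| := Finset.abs_sum_le_sum_abs _ _
      _ ≤ ∑ i, (9/8) * |y i| := by
          refine Finset.sum_le_sum fun i _ => ?_
          have h1 := hy40 i
          have h2 := (ha i).1
          have h3 := (ha i).2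
          have h5 := abs_nonneg (y i)
          rw [abs_le]
          constructor <;>
            cases abs_cases (y i) with
            | inl h => nlinarith [h.1, h.2]
            | inr h => nlinarith [h.1, h.2]
      _ = (9/8) * Y := by rw [hYdef, Finset.mul_sum]
  have hS06 : |S| ≤ 9/160 := by nlinarith
  have hSa : (0:ℝ) ≤ |S| := abs_nonneg _
  set E : ℝ := Real.exp (-S) with hEdef
  have hE0 : 0 < E := Real.exp_pos _
  have hEid : |E - 1 - (-S)| ≤ (-S)^2 := Real.abs_exp_sub_one_sub_id_le (by
    rw [abs_neg]; exact hS06.trans (by norm_num))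
  have hE1 : |E - 1| ≤ |S| + S^2 := by
    calc |E - 1| = |(E - 1 - (-S)) + (-S)| := by norm_num
      _ ≤ |E - 1 - (-S)| + |(-S)| := abs_add_le _ _
      _ ≤ (-S)^2 + |S| := by rw [abs_neg]; exact add_le_add hEid (le_refl _)
      _ = |S| + S^2 := by rw [neg_sq]; ring
  have hEub : E ≤ 1 + |S| + S^2 := by
    have := (abs_le.mp hE1).2; linarith
  have hSq : S^2 ≤ (9/160) * |S| := by rw [← sq_abs]; nlinarith
  set t : ℝ := x * E with htdef
  have ht10 : |t| ≤ 1/10 := by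
    rw [htdef, abs_mul, abs_of_pos hE0]
    nlinarith [abs_nonneg x]
  have hkey : t + t^2 ≤ x + x^2 + 2 * |x| * Y := by
    have h1 : x * E - x ≤ |x| * (|S| + S^2) := by
      calc x * E - x = x * (E - 1) := by ring
        _ ≤ |x * (E - 1)| := le_abs_self _
        _ = |x| * |E - 1| := abs_mul _ _
        _ ≤ |x| * (|S| + S^2) := mul_le_mul_of_nonneg_left hE1 (abs_nonneg _)
    have hEub2 : E + 1 ≤ 3 := by nlinarith
    have h2 : x^2 * E^2 - x^2 ≤ x^2 * ((|S| + S^2) * 3) := by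
      have heq : x^2 * E^2 - x^2 = x^2 * ((E - 1) * (E + 1)) := by ring
      rw [heq]
      refine mul_le_mul_of_nonneg_left ?_ (sq_nonneg x)
      calc (E - 1) * (E + 1) ≤ |E - 1| * (E + 1) :=
            mul_le_mul_of_nonneg_right (le_abs_self _) (by linarith)
        _ ≤ (|S| + S^2) * (E + 1) := mul_le_mul_of_nonneg_right hE1 (by linarith)
        _ ≤ (|S| + S^2) * 3 := by
            refine mul_le_mul_of_nonneg_left hEub2 ?_; nlinarith
    have ht2 : t^2 = x^2 * E^2 := by rw [htdef]; ring
    have hxa : (0:ℝ) ≤ |x| := abs_nonneg _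
    have hx2 : x^2 ≤ |x| * (1/40) := by rw [← sq_abs]; nlinarith
    have hxS := mul_le_mul_of_nonneg_left hS hxa
    rw [htdef, ht2]
    nlinarith [mul_nonneg hxa hSa, mul_nonneg (mul_nonneg hxa hSa) hY0,
      mul_nonneg hxa hY0]
  have hsplit : (∑ i, (-(y i) - (y i) ^ 2 - 2 * a i * |y i| - 2 * |x * y i|))
      = S - 2 * |x| * Y := by
    rw [hSdef, hYdef, Finset.mul_sum, ← Finset.sum_sub_distrib]
    refine Finset.sum_congr rfl fun i _ => ?_
    rw [abs_mul]; ring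
  rw [hsplit]
  have step1 : Real.exp (S - 2 * |x| * Y - x - x^2) ≤ Real.exp S * Real.exp (-t - t^2) := by
    rw [← Real.exp_add]
    exact Real.exp_le_exp.mpr (by linarith)
  refine step1.trans ?_
  have step2 : Real.exp S * Real.exp (-t - t^2) ≤ Real.exp S * (1 - t) :=
    mul_le_mul_of_nonneg_left (aux1 t ht10) (Real.exp_pos _).le
  refine step2.trans ?_
  have hfin : Real.exp S * (1 - t) = Real.exp S - x := by
    rw [htdef, hEdef]
    have h1 : Real.exp S * Real.exp (-S) = 1 := by rw [← Real.exp_add]; simp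
    rw [mul_sub, mul_one, show Real.exp S * (x * Real.exp (-S))
        = x * (Real.exp S * Real.exp (-S)) by ring, h1, mul_one]
  linarith [hfin.le]
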